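/- Realize the root system C_ℓ in ℝ^ℓ (ℓ ≥ 2) with simple roots α_h = e_h − e_{h+1} (1 ≤ h ≤ ℓ−1), α_ℓ = 2e_ℓ. Let Π¹ = {α_{i_1}, …, α_{i_k}} with i_1 < ⋯ < i_k and k ≥ 2. Then Π¹ is admissible if and only if i_k = ℓ. -/

import Mathlib

/-- In the root system `C_ℓ` with simple roots
`α_h = e_h - e_{h+1}` (`h < ℓ`), `α_ℓ = 2e_ℓ`, a subset
`Π¹ = {α_{i_1}, …, α_{i_k}}` (`i_1 < ⋯ < i_k`, `k ≥ 2`) is admissible iff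
`i_k = ℓ` (i.e. the last simple root belongs to `Π¹`). -/
theorem C_ell_admissible_iff
    (ℓ : ℕ) (hℓ : 2 ≤ ℓ)
    (e : Fin ℓ → (Fin ℓ → ℝ))
    (he : ∀ i, e i = Pi.single i 1)
    (α : Fin ℓ → (Fin ℓ → ℝ))
    (hα : ∀ (h : Fin ℓ) (hh : (h : ℕ) + 1 < ℓ), α h = e h - e ⟨(h : ℕ) + 1, hh⟩)
    (hαlast : α ⟨ℓ - 1, by omega⟩ = (2 : ℝ) • e ⟨ℓ - 1, by omega⟩)
    (R : Set (Fin ℓ → ℝ))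
    (hR : R = {v | (∃ i j : Fin ℓ, i ≠ j ∧ v = e i - e j) ∨
        (∃ i j : Fin ℓ, i < j ∧ (v = e i + e j ∨ v = -(e i + e j))) ∨
        (∃ i : Fin ℓ, v = (2 : ℝ) • e i ∨ v = -((2 : ℝ) • e i))})
    (k : ℕ) (hk : 2 ≤ k)
    (idx : Fin k → Fin ℓ) (hidx : StrictMono idx)
    (Pi1 : Finset (Fin ℓ)) (hPi1 : ∀ h, h ∈ Pi1 ↔ ∃ t, idx t = h) :
    (¬ ∃ a ∈ Pi1, ∃ kf : Fin ℓ → ℕ, (∀ h, kf h ≠ 0 → h ∉ Pi1) ∧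
        ((2 : ℝ) • α a + ∑ h, (kf h : ℝ) • α h) ∈ R) ↔
      (idx ⟨k - 1, by omega⟩ : ℕ) = ℓ - 1 := by
  have hℓ1 : ℓ - 1 < ℓ := by omega
  set last : Fin ℓ := ⟨ℓ - 1, hℓ1⟩ with hlastdef
  have hαlast' : α last = (2 : ℝ) • e last := hαlast
  -- sum of a basis vector over a finset
  have hsum1 : ∀ (s : Finset (Fin ℓ)) (i : Fin ℓ),
      ∑ j ∈ s, e i j = (if i ∈ s then (1:ℝ) else 0) := by
    intro s i; rw [he]; exact Finset.sum_pi_single' i 1 s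
  -- sum of a non-last simple root over a finset
  have hsumα : ∀ (s : Finset (Fin ℓ)) (h : Fin ℓ) (hh : (h:ℕ)+1 < ℓ),
      ∑ j ∈ s, α h j =
        (if h ∈ s then (1:ℝ) else 0) - (if (⟨(h:ℕ)+1, hh⟩ : Fin ℓ) ∈ s then 1 else 0) := by
    intro s h hh
    rw [hα h hh]
    simp only [Pi.sub_apply, Finset.sum_sub_distrib, hsum1]
  -- sum of the last simple root over a finset
  have hsumαl : ∀ (s : Finset (Fin ℓ)),
      ∑ j ∈ s, α last j = if last ∈ s then (2:ℝ) else 0 := by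
    intro s
    rw [hαlast']
    simp only [Pi.smul_apply, smul_eq_mul, ← Finset.mul_sum, hsum1]
    split <;> norm_num
  -- sum of a combination over a finset
  have hcomb : ∀ (s : Finset (Fin ℓ)) (a : Fin ℓ) (kf : Fin ℓ → ℕ),
      ∑ j ∈ s, ((2:ℝ) • α a + ∑ h, (kf h : ℝ) • α h) j
        = 2 * (∑ j ∈ s, α a j) + ∑ h, (kf h : ℝ) * (∑ j ∈ s, α h j) := by
    intro s a kf
    simp only [Pi.add_apply, Pi.smul_apply, Finset.sum_apply, smul_eq_mul,
      Finset.sum_add_distrib, Finset.mul_sum]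
    rw [Finset.sum_comm]
  constructor
  · -- admissible → last index is ℓ - 1 (contrapositive)
    intro hadm
    by_contra hne
    exfalso
    apply hadm
    set m : Fin ℓ := idx ⟨k-1, by omega⟩ with hm
    have hM : (m:ℕ) < ℓ - 1 := by have := m.isLt; omega
    set kf : Fin ℓ → ℕ :=
      fun h => if (h:ℕ) ≤ (m:ℕ) then 0 else if (h:ℕ) < ℓ-1 then 2 else 1 with hkf
    refine ⟨m, (hPi1 m).2 ⟨⟨k-1, by omega⟩, rfl⟩, kf, ?_, ?_⟩
    · intro h hne0 hmem
      rcases (hPi1 h).1 hmem with ⟨t, rfl⟩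
      have hle : idx t ≤ m := hidx.monotone (by
        simp only [Fin.le_def]
        have := t.isLt; omega)
      rw [Fin.le_def] at hle
      simp only [hkf, if_pos hle] at hne0
      exact hne0 rfl
    · -- the combination equals 2 • e m
      have hM1 : (m:ℕ) + 1 < ℓ := by omega
      set M : ℕ := (m:ℕ) with hMdef
      set E : ℕ → (Fin ℓ → ℝ) := fun n => if hn : n < ℓ then e ⟨n, hn⟩ else 0 with hE
      set g : ℕ → (Fin ℓ → ℝ) :=
        fun n => if hn : n < ℓ then ((kf ⟨n,hn⟩ : ℝ)) • α ⟨n,hn⟩ else 0 with hg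
      have step1 : ∑ h : Fin ℓ, (kf h : ℝ) • α h = ∑ n ∈ Finset.range ℓ, g n := by
        rw [← Fin.sum_univ_eq_sum_range g ℓ]
        refine Finset.sum_congr rfl fun i _ => ?_
        simp [hg, i.isLt]
      have step2 : ∑ n ∈ Finset.range ℓ, g n
          = ∑ n ∈ Finset.range (ℓ-1), g n + g (ℓ-1) := by
        have h1 : ∑ n ∈ Finset.range ((ℓ-1)+1), g n
            = ∑ n ∈ Finset.range (ℓ-1), g n + g (ℓ-1) := Finset.sum_range_succ g (ℓ-1)
        rw [show (ℓ-1)+1 = ℓ from by omega] at h1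
        exact h1
      have step3 : ∑ n ∈ Finset.range (ℓ-1), g n
          = ∑ n ∈ Finset.Ico 0 (M+1), g n + ∑ n ∈ Finset.Ico (M+1) (ℓ-1), g n := by
        rw [Finset.range_eq_Ico]
        exact (Finset.sum_Ico_consecutive g (by omega) (by omega)).symm
      have step4 : ∑ n ∈ Finset.Ico 0 (M+1), g n = 0 := by
        refine Finset.sum_eq_zero fun n hn => ?_
        rw [Finset.mem_Ico] at hn
        have hnl : n < ℓ := by omega
        simp only [hg, dif_pos hnl]
        have : kf ⟨n, hnl⟩ = 0 := by
          simp only [hkf]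
          rw [if_pos]
          omega
        rw [this]
        simp
      have step5 : ∑ n ∈ Finset.Ico (M+1) (ℓ-1), g n
          = (2:ℝ) • (E (M+1) - E (ℓ-1)) := by
        have hterm : ∀ n ∈ Finset.Ico (M+1) (ℓ-1),
            g n = (2:ℝ) • (E n - E (n+1)) := by
          intro n hn
          rw [Finset.mem_Ico] at hn
          have hnl : n < ℓ := by omega
          have hnl1 : n + 1 < ℓ := by omega
          simp only [hg, dif_pos hnl]
          have hkfn : kf ⟨n, hnl⟩ = 2 := by
            simp only [hkf, Fin.val_mk]
            rw [if_neg (by omega), if_pos (by omega)]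
          rw [hkfn, hα ⟨n, hnl⟩ (by simpa using hnl1)]
          simp only [hE, dif_pos hnl, dif_pos hnl1]
          norm_num
        rw [Finset.sum_congr rfl hterm, ← Finset.smul_sum]
        congr 1
        rw [Finset.sum_Ico_eq_sum_range]
        have htel : ∑ i ∈ Finset.range (ℓ-1-(M+1)), (E (M+1+i) - E (M+1+i+1))
            = E (M+1+0) - E (M+1+(ℓ-1-(M+1))) :=
          Finset.sum_range_sub' (fun i => E (M+1+i)) (ℓ-1-(M+1))
        rw [show M+1+(ℓ-1-(M+1)) = ℓ-1 from by omega, show M+1+0 = M+1 from rfl] at htel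
        exact htel
      have step6 : g (ℓ-1) = (2:ℝ) • E (ℓ-1) := by
        simp only [hg, dif_pos hℓ1]
        have hkfl : kf ⟨ℓ-1, hℓ1⟩ = 1 := by
          simp only [hkf, Fin.val_mk]
          rw [if_neg (by omega), if_neg (by omega)]
        rw [hkfl, hαlast']
        simp only [hE, dif_pos hℓ1]
        norm_num
        rfl
      have hEM1 : E (M+1) = e ⟨M+1, hM1⟩ := by simp only [hE, dif_pos hM1]
      have hEl : E (ℓ-1) = e last := by simp only [hE, dif_pos hℓ1]; rfl
      have hαm : α m = e m - e ⟨M+1, hM1⟩ := by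
        have := hα m hM1
        convert this using 2
      have key : (2:ℝ) • α m + ∑ h, (kf h : ℝ) • α h = (2:ℝ) • e m := by
        rw [step1, step2, step3, step4, step5, step6, hEM1, hEl, hαm]
        module
      rw [key, hR]
      exact Or.inr (Or.inr ⟨m, Or.inl rfl⟩)
  · -- last index is ℓ - 1 → admissible
    intro hlast_eq
    rintro ⟨a, ha, kf, hsupp, hroot⟩
    have hlastmem : last ∈ Pi1 := (hPi1 last).2 ⟨⟨k-1, by omega⟩, Fin.ext hlast_eq⟩
    have hkfl : kf last = 0 := by
      by_contra h
      exact hsupp last h hlastmem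
    -- value of F = sum of all coordinates on each simple root
    have hFα : ∀ h : Fin ℓ, ∑ j, α h j = if h = last then (2:ℝ) else 0 := by
      intro h
      by_cases hh : (h:ℕ)+1 < ℓ
      · rw [hsumα Finset.univ h hh]
        have hne : h ≠ last := by
          intro heq
          have : (h:ℕ) = ℓ - 1 := by rw [heq]
          omega
        simp [hne]
      · have hh' : h = last := Fin.ext (by have := h.isLt; simp only [hlastdef]; omega)
        rw [hh', hsumαl]
        simp
    -- F of the combination
    set v := (2:ℝ) • α a + ∑ h, (kf h : ℝ) • α h with hv
    have hFv : ∑ j, v j = 2 * (if a = last then (2:ℝ) else 0) := by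
      rw [hv, hcomb]
      have : ∑ h, (kf h : ℝ) * (∑ j, α h j) = 0 := by
        rw [Finset.sum_eq_zero]
        intro h _
        rw [hFα]
        by_cases hh : h = last
        · rw [hh, hkfl]; simp
        · simp [hh]
      rw [this, hFα]
      ring
    -- F of each root
    rw [hR] at hroot
    rcases hroot with ⟨i, j, hij, hvv⟩ | ⟨i, j, hij, hvv | hvv⟩ | ⟨i, hvv | hvv⟩
    · -- v = e i - e j : use the partial-sum functional G
      have hFv0 : ∑ jj, v jj = 0 := by
        rw [hvv]
        simp only [Pi.sub_apply, Finset.sum_sub_distrib, hsum1]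
        simp
      have hal : a ≠ last := by
        intro heq
        rw [hFv0, heq] at hFv
        simp at hFv
      have haℓ : (a:ℕ) + 1 < ℓ := by
        have h1 : (a:ℕ) ≠ ℓ - 1 := fun h => hal (Fin.ext h)
        have := a.isLt; omega
      set s : Finset (Fin ℓ) := Finset.univ.filter (fun x => (x:ℕ) ≤ (a:ℕ)) with hs
      have hmem : ∀ x : Fin ℓ, x ∈ s ↔ (x:ℕ) ≤ (a:ℕ) := by
        intro x; simp [hs]
      -- G is nonnegative on every simple root
      have hGnn : ∀ h : Fin ℓ, 0 ≤ ∑ jj ∈ s, α h jj := by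
        intro h
        by_cases hh : (h:ℕ)+1 < ℓ
        · rw [hsumα s h hh]
          simp only [hmem]
          split_ifs <;> first | omega | norm_num
        · have hh' : h = last := Fin.ext (by have := h.isLt; simp only [hlastdef]; omega)
          rw [hh', hsumαl]
          split <;> norm_num
      have hGa : ∑ jj ∈ s, α a jj = 1 := by
        rw [hsumα s a haℓ]
        simp only [hmem, Fin.val_mk]
        rw [if_pos (le_refl _), if_neg (by omega)]
        norm_num
      have hGv : (2:ℝ) ≤ ∑ jj ∈ s, v jj := by
        rw [hv, hcomb, hGa]
        have h2 : 0 ≤ ∑ h, (kf h : ℝ) * (∑ jj ∈ s, α h jj) := by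
          refine Finset.sum_nonneg fun h _ => ?_
          exact mul_nonneg (Nat.cast_nonneg _) (hGnn h)
        linarith
      have hGroot : ∑ jj ∈ s, v jj ≤ 1 := by
        rw [hvv]
        simp only [Pi.sub_apply, Finset.sum_sub_distrib, hsum1]
        split_ifs <;> norm_num
      linarith
    · -- v = e i + e j : F = 2, but F v = 0 or 4
      have : ∑ jj, v jj = 2 := by
        rw [hvv]
        simp only [Pi.add_apply, Finset.sum_add_distrib, hsum1]
        norm_num
      rw [this] at hFv
      split_ifs at hFv <;> norm_num at hFv
    · have : ∑ jj, v jj = -2 := by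
        rw [hvv]
        simp only [Pi.neg_apply, Pi.add_apply, Finset.sum_neg_distrib, Finset.sum_add_distrib, hsum1]
        norm_num
      rw [this] at hFv
      split_ifs at hFv <;> norm_num at hFv
    · have : ∑ jj, v jj = 2 := by
        rw [hvv]
        simp only [Pi.smul_apply, smul_eq_mul, ← Finset.mul_sum, hsum1]
        simp
      rw [this] at hFv
      split_ifs at hFv <;> norm_num at hFv
    · have : ∑ jj, v jj = -2 := by
        rw [hvv]
        simp only [Pi.neg_apply, Pi.smul_apply, smul_eq_mul, Finset.sum_neg_distrib, ← Finset.mul_sum, hsum1]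
        simp
      rw [this] at hFv
      split_ifs at hFv <;> norm_num at hFv
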